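/- Suppose p : ℝ → ℝ is a polynomial of the form p(s) = ⟨∑_{i=1}^{m} i·aᵢ s^{i-1}, ∑_{i=1}^{m} i·aᵢ s^{i-1}⟩ for vectors aᵢ ∈ ℝⁿ, and p(s) = 1 for all s. Then aᵢ = 0 for all i ≥ 2 and ‖a₁‖ = 1. -/

import Mathlib

open Finset Polynomial

lemma top_vanish (n m : ℕ) (hm : 2 ≤ m) (a : ℕ → EuclideanSpace ℝ (Fin n))
    (h : ∀ s : ℝ,
      (inner ℝ (∑ i ∈ Finset.Icc 1 m, ((i : ℝ) * s ^ (i - 1)) • a i)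
             (∑ i ∈ Finset.Icc 1 m, ((i : ℝ) * s ^ (i - 1)) • a i) : ℝ) = 1) :
    a m = 0 := by
  set q : Polynomial ℝ :=
    ∑ i ∈ Finset.Icc 1 m, ∑ j ∈ Finset.Icc 1 m,
      C ((i : ℝ) * j * inner ℝ (a i) (a j)) * X ^ (i + j - 2) with hq
  have heval : ∀ s : ℝ, q.eval s = 1 := by
    intro s
    rw [hq]
    simp only [eval_finset_sum, eval_mul, eval_C, eval_pow, eval_X]
    rw [← h s, sum_inner]
    refine Finset.sum_congr rfl fun i hi => ?_
    rw [inner_sum]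
    refine Finset.sum_congr rfl fun j hj => ?_
    rw [real_inner_smul_left, real_inner_smul_right]
    simp only [Finset.mem_Icc] at hi hj
    have hij : i + j - 2 = (i - 1) + (j - 1) := by omega
    rw [hij, pow_add]; ring
  have hq1 : q = C 1 := by
    apply Polynomial.funext
    intro s; simp [heval s]
  have hc := congrArg (fun p => Polynomial.coeff p (2 * m - 2)) hq1
  simp only [coeff_C] at hc
  rw [if_neg (by omega : ¬ 2 * m - 2 = 0)] at hc
  have hcoeff : q.coeff (2 * m - 2) = (m : ℝ) * m * inner ℝ (a m) (a m) := by
    rw [hq, finset_sum_coeff]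
    rw [Finset.sum_eq_single_of_mem m (by simp; omega)]
    · rw [finset_sum_coeff]
      rw [Finset.sum_eq_single_of_mem m (by simp; omega)]
      · rw [coeff_C_mul, coeff_X_pow, if_pos (by omega)]
        ring
      · intro j hj hjm
        simp only [Finset.mem_Icc] at hj
        rw [coeff_C_mul, coeff_X_pow, if_neg (by omega), mul_zero]
    · intro i hi him
      simp only [Finset.mem_Icc] at hi
      rw [finset_sum_coeff]
      apply Finset.sum_eq_zero
      intro j hj
      simp only [Finset.mem_Icc] at hj
      rw [coeff_C_mul, coeff_X_pow, if_neg (by omega), mul_zero]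
  rw [hcoeff] at hc
  have hm' : (m : ℝ) ≠ 0 := Nat.cast_ne_zero.mpr (by omega)
  simp only [mul_eq_zero, hm', false_or] at hc
  exact inner_self_eq_zero.mp hc

theorem coefficients_vanish_of_unit_norm_poly
    (n m : ℕ) (a : ℕ → EuclideanSpace ℝ (Fin n))
    (h : ∀ s : ℝ,
      (inner ℝ (∑ i ∈ Finset.Icc 1 m, ((i : ℝ) * s ^ (i - 1)) • a i)
             (∑ i ∈ Finset.Icc 1 m, ((i : ℝ) * s ^ (i - 1)) • a i) : ℝ) = 1) :
    (∀ i, 2 ≤ i → i ≤ m → a i = 0) ∧ ‖a 1‖ = 1 := by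
  induction m with
  | zero => exact absurd (h 0) (by simp)
  | succ m ih =>
    rcases Nat.eq_zero_or_pos m with rfl | hm
    · refine ⟨fun i h2 h1 => by omega, ?_⟩
      have h0 := h 0
      simp only [Finset.Icc_self, Finset.sum_singleton, Nat.cast_one, one_mul,
        Nat.sub_self, pow_zero, one_smul] at h0
      rw [real_inner_self_eq_norm_mul_norm] at h0
      have := norm_nonneg (a 1)
      nlinarith
    · have ha : a (m + 1) = 0 := top_vanish n (m + 1) (by omega) a h
      have h' : ∀ s : ℝ,
          (inner ℝ (∑ i ∈ Finset.Icc 1 m, ((i : ℝ) * s ^ (i - 1)) • a i)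
                 (∑ i ∈ Finset.Icc 1 m, ((i : ℝ) * s ^ (i - 1)) • a i) : ℝ) = 1 := by
        intro s
        have hs := h s
        rw [Finset.sum_Icc_succ_top (by omega)] at hs
        simpa [ha] using hs
      obtain ⟨h1, h2⟩ := ih h'
      refine ⟨fun i hi2 him => ?_, h2⟩
      rcases Nat.lt_or_ge i (m + 1) with hlt | hge
      · exact h1 i hi2 (by omega)
      · have : i = m + 1 := by omega
        rw [this]; exact ha
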